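/- arXiv:2605.08892 — 7 statements merged into one kernel-verified Lean document; each statement's English description precedes it below -/
import Mathlib

section
/- Let R ⊆ ℕ^n be a finite set satisfying the monomial condition. Then S_R = L_R · L_Rᵀ, i.e., for all k, k' ∈ R one has C(k + k', k) = ∑_{j ∈ R} C(k,j) · C(k',j). -/
open Finset

lemma vand (a b : ℕ) : ∑ x ∈ Finset.range (a+1), a.choose x * b.choose x = (a+b).choose a := by
  rw [Nat.add_choose_eq, Finset.Nat.sum_antidiagonal_eq_sum_range_succ
    (fun i j => a.choose i * b.choose j), ← Finset.sum_range_reflect]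
  apply Finset.sum_congr rfl
  intro x hx
  rw [Finset.mem_range] at hx
  have h1 : a + 1 - 1 - x = a - x := by omega
  rw [h1, Nat.choose_symm (by omega)]

/-- If the finite set `R ⊆ ℕ^n` satisfies the monomial condition (downward closed),
then `S_R = L_R · L_Rᵀ`. -/
theorem stmt6 (n : ℕ) (R : Finset (Fin n → ℕ))
    (hR : ∀ k ∈ R, ∀ i : Fin n → ℕ, (∀ j, i j ≤ k j) → i ∈ R) :
    (Matrix.of fun k k' : R => ((∏ j, (k.1 j + k'.1 j).choose (k.1 j) : ℕ) : ℤ)) =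
      (Matrix.of fun k k' : R => ((∏ j, (k.1 j).choose (k'.1 j) : ℕ) : ℤ)) *
        (Matrix.of fun k k' : R => ((∏ j, (k.1 j).choose (k'.1 j) : ℕ) : ℤ)).transpose := by
  ext k k'
  simp only [Matrix.mul_apply, Matrix.transpose_apply, Matrix.of_apply]
  have key : (∏ j, (k.1 j + k'.1 j).choose (k.1 j)) =
      ∑ i ∈ R, (∏ j, (k.1 j).choose (i j)) * (∏ j, (k'.1 j).choose (i j)) := by
    have hbox : ∀ i ∈ R, i ∉ Fintype.piFinset (fun j => Finset.range (k.1 j + 1)) →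
        (∏ j, (k.1 j).choose (i j)) * (∏ j, (k'.1 j).choose (i j)) = 0 := by
      intro i _ hi
      simp only [Fintype.mem_piFinset, Finset.mem_range, not_forall, not_lt] at hi
      obtain ⟨j, hj⟩ := hi
      have : (k.1 j).choose (i j) = 0 := Nat.choose_eq_zero_of_lt (by omega)
      rw [mul_eq_zero]; left
      exact Finset.prod_eq_zero (Finset.mem_univ j) this
    have hsub : Fintype.piFinset (fun j => Finset.range (k.1 j + 1)) ⊆ R := by
      intro i hi
      simp only [Fintype.mem_piFinset, Finset.mem_range] at hi
      exact hR k.1 k.2 i (fun j => by have := hi j; omega)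
    rw [← Finset.sum_subset hsub hbox]
    have := Finset.prod_univ_sum (fun j : Fin n => Finset.range (k.1 j + 1))
      (fun j x => (k.1 j).choose x * (k'.1 j).choose x)
    simp only [vand] at this
    have h2 : ∑ i ∈ Fintype.piFinset (fun j => Finset.range (k.1 j + 1)),
        (∏ j, (k.1 j).choose (i j)) * (∏ j, (k'.1 j).choose (i j)) =
        ∑ i ∈ Fintype.piFinset (fun j => Finset.range (k.1 j + 1)),
        ∏ j, (k.1 j).choose (i j) * (k'.1 j).choose (i j) :=
      Finset.sum_congr rfl fun i _ => (Finset.prod_mul_distrib).symm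
    rw [h2]
    exact this
  calc ((∏ j, (k.1 j + k'.1 j).choose (k.1 j) : ℕ) : ℤ)
      = ((∑ i ∈ R, (∏ j, (k.1 j).choose (i j)) * (∏ j, (k'.1 j).choose (i j)) : ℕ) : ℤ) := by
        rw [key]
    _ = ∑ i ∈ R.attach, ((∏ j, (k.1 j).choose (i.1 j) : ℕ) : ℤ) *
          ((∏ j, (k'.1 j).choose (i.1 j) : ℕ) : ℤ) := by
        push_cast
        rw [← Finset.sum_attach R]
    _ = _ := by rfl
end

section
/- Let R ⊆ ℕ^n be a finite set satisfying the monomial condition. Then the determinant of the symmetric Pascal matrix S_R, indexed by R × R with (k,k')-entry C(k + k', k), equals 1. -/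
open Finset Matrix

private lemma choose_sum_aux (a b : ℕ) :
    (a + b).choose a = ∑ c ∈ Finset.range (b + 1), a.choose c * b.choose c := by
  rw [Nat.choose_symm_add, Nat.add_choose_eq,
    Finset.Nat.sum_antidiagonal_eq_sum_range_succ_mk]
  refine Finset.sum_congr rfl fun c hc => ?_
  rw [Nat.choose_symm (Finset.mem_range_succ_iff.mp hc)]

/-- If the finite set `R ⊆ ℕ^n` satisfies the monomial condition (downward closed),
then the determinant of the symmetric Pascal matrix `S_R = (C(k+k',k))_{k,k' ∈ R}` is `1`. -/
theorem stmt7 (n : ℕ) (R : Finset (Fin n → ℕ))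
    (hR : ∀ k ∈ R, ∀ i : Fin n → ℕ, (∀ j, i j ≤ k j) → i ∈ R) :
    (Matrix.of fun k k' : R => ((∏ j, (k.1 j + k'.1 j).choose (k.1 j) : ℕ) : ℤ)).det = 1 := by
  classical
  set L : Matrix R R ℤ :=
    Matrix.of fun k i : R => ((∏ j, (k.1 j).choose (i.1 j) : ℕ) : ℤ) with hL
  -- the key factorization S = L * Lᵀ
  have hfac : (Matrix.of fun k k' : R =>
      ((∏ j, (k.1 j + k'.1 j).choose (k.1 j) : ℕ) : ℤ)) = L * Lᵀ := by
    ext k k'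
    simp only [Matrix.mul_apply, Matrix.transpose_apply, hL, Matrix.of_apply]
    norm_cast
    -- natural number identity
    calc ∏ j, (k.1 j + k'.1 j).choose (k.1 j)
        = ∏ j, ∑ c ∈ Finset.range (k'.1 j + 1), (k.1 j).choose c * (k'.1 j).choose c := by
          exact Finset.prod_congr rfl fun j _ => choose_sum_aux _ _
      _ = ∑ p ∈ Fintype.piFinset (fun j => Finset.range (k'.1 j + 1)),
            ∏ j, (k.1 j).choose (p j) * (k'.1 j).choose (p j) := by
          rw [Finset.prod_univ_sum]
      _ = ∑ p ∈ Fintype.piFinset (fun j => Finset.range (k'.1 j + 1)),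
            (∏ j, (k.1 j).choose (p j)) * ∏ j, (k'.1 j).choose (p j) := by
          exact Finset.sum_congr rfl fun p _ => Finset.prod_mul_distrib
      _ = ∑ p ∈ R, (∏ j, (k.1 j).choose (p j)) * ∏ j, (k'.1 j).choose (p j) := by
          set T := Fintype.piFinset (fun j => Finset.range (k'.1 j + 1)) with hT
          set g : (Fin n → ℕ) → ℕ :=
            fun p => (∏ j, (k.1 j).choose (p j)) * ∏ j, (k'.1 j).choose (p j) with hg
          have hvan : ∀ p, (∃ j, k'.1 j < p j) → g p = 0 := by
            rintro p ⟨j, hj⟩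
            have h0 : ∏ j, (k'.1 j).choose (p j) = 0 :=
              Finset.prod_eq_zero (Finset.mem_univ j) (Nat.choose_eq_zero_of_lt hj)
            simp [hg, h0]
          have h1 : ∑ p ∈ T ∩ R, g p = ∑ p ∈ T, g p := by
            refine Finset.sum_subset Finset.inter_subset_left fun p hpT hpn => ?_
            by_contra hne
            apply hpn
            refine Finset.mem_inter.mpr ⟨hpT, hR k'.1 k'.2 p fun j => ?_⟩
            by_contra hj
            exact hne (hvan p ⟨j, Nat.lt_of_not_le hj⟩)
          have h2 : ∑ p ∈ T ∩ R, g p = ∑ p ∈ R, g p := by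
            refine Finset.sum_subset Finset.inter_subset_right fun p hpR hpn => ?_
            by_contra hne
            apply hpn
            refine Finset.mem_inter.mpr ⟨?_, hpR⟩
            rw [hT, Fintype.mem_piFinset]
            intro j
            rw [Finset.mem_range_succ_iff]
            by_contra hj
            exact hne (hvan p ⟨j, Nat.lt_of_not_le hj⟩)
          rw [← h1, h2]
      _ = ∑ p ∈ R.attach, (∏ j, (k.1 j).choose (p.1 j)) * ∏ j, (k'.1 j).choose (p.1 j) := by
          rw [Finset.sum_attach R
            (fun p => (∏ j, (k.1 j).choose (p j)) * ∏ j, (k'.1 j).choose (p j))]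
      _ = ∑ p : R, (∏ j, (k.1 j).choose (p.1 j)) * ∏ j, (k'.1 j).choose (p.1 j) := rfl
  -- L is block triangular for the weight function
  set b : R → ℕ := fun k => ∑ j, k.1 j with hb
  have hzero : ∀ k i : R, (∃ j, k.1 j < i.1 j) → L k i = 0 := by
    rintro k i ⟨j, hj⟩
    simp only [hL, Matrix.of_apply]
    rw [Finset.prod_eq_zero (Finset.mem_univ j) (Nat.choose_eq_zero_of_lt hj)]
    simp
  have hbt : Lᵀ.BlockTriangular b := by
    intro i k hlt
    refine hzero k i ?_
    by_contra h
    push_neg at h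
    exact absurd (Finset.sum_le_sum fun j _ => h j) (Nat.not_le.mpr hlt)
  have hdetLT : Lᵀ.det = 1 := by
    rw [hbt.det]
    refine Finset.prod_eq_one fun a _ => ?_
    have hblock : Lᵀ.toSquareBlock b a = 1 := by
      ext i k
      simp only [Matrix.toSquareBlock_def, Matrix.transpose_apply]
      by_cases hik : i = k
      · subst hik
        simp only [Matrix.one_apply_eq, hL, Matrix.of_apply]
        simp [Nat.choose_self]
      · rw [Matrix.one_apply_ne hik]
        refine hzero k.1 i.1 ?_
        by_contra h
        push_neg at h
        have hsum : b k.1 = b i.1 := by rw [k.2, i.2]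
        have : ∀ j ∈ Finset.univ, i.1.1 j = k.1.1 j :=
          (Finset.sum_eq_sum_iff_of_le fun j _ => h j).mp hsum.symm
        exact hik (Subtype.ext (Subtype.ext (funext fun j => this j (Finset.mem_univ j))))
    rw [hblock, Matrix.det_one]
  rw [hfac, Matrix.det_mul, ← Matrix.det_transpose L, hdetLT, mul_one]
end

section
/- Let R ⊆ ℕ^n be a finite set satisfying the monomial condition and let p ∈ ℕ. Then for every k ∈ R, the polynomial identity ∑_{k' ∈ R} ((L_R)^p)_{k,k'} · x_1^{k'_1}⋯x_n^{k'_n} = ∏_{j=1}^n (p + x_j)^{k_j} holds in ℤ[x_1,…,x_n], where (L_R)^p denotes the p-th matrix power of L_R. -/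
open MvPolynomial

lemma key10 (n : ℕ) (R : Finset (Fin n → ℕ))
    (hR : ∀ k ∈ R, ∀ i : Fin n → ℕ, (∀ j, i j ≤ k j) → i ∈ R) (k : R) :
    ∑ k' : R, MvPolynomial.C ((∏ j, (k.1 j).choose (k'.1 j) : ℕ) : ℤ) *
        ∏ j, MvPolynomial.X j ^ k'.1 j =
      (∏ j, (1 + MvPolynomial.X j) ^ k.1 j : MvPolynomial (Fin n) ℤ) := by
  classical
  have hsub : Fintype.piFinset (fun j => Finset.range (k.1 j + 1)) ⊆ R := by
    intro i hi
    exact hR k.1 k.2 i (fun j => Nat.lt_succ_iff.mp (Finset.mem_range.mp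
      (Fintype.mem_piFinset.mp hi j)))
  have h1 : ∑ k' : R, MvPolynomial.C ((∏ j, (k.1 j).choose (k'.1 j) : ℕ) : ℤ) *
        ∏ j, MvPolynomial.X j ^ k'.1 j
      = ∑ k' ∈ R, MvPolynomial.C ((∏ j, (k.1 j).choose (k' j) : ℕ) : ℤ) *
        ∏ j, MvPolynomial.X j ^ k' j := by
    exact Finset.sum_coe_sort R (fun k' => MvPolynomial.C ((∏ j, (k.1 j).choose (k' j) : ℕ) : ℤ) *
        ∏ j, MvPolynomial.X j ^ k' j)
  rw [h1]
  rw [← Finset.sum_subset hsub]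
  · have : ∀ k' ∈ Fintype.piFinset (fun j => Finset.range (k.1 j + 1)), MvPolynomial.C ((∏ j, (k.1 j).choose (k' j) : ℕ) : ℤ) *
        ∏ j, MvPolynomial.X j ^ k' j
        = ∏ j, (MvPolynomial.C (((k.1 j).choose (k' j) : ℕ) : ℤ) * MvPolynomial.X j ^ k' j) := by
      intro k' _
      push_cast
      rw [Finset.prod_mul_distrib]
      congr 1
      simp [map_prod]
    rw [Finset.sum_congr rfl this]
    have hps := Finset.prod_univ_sum (fun j => Finset.range (k.1 j + 1))
      (fun j i => (MvPolynomial.C (((k.1 j).choose i : ℕ) : ℤ) * MvPolynomial.X j ^ i :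
        MvPolynomial (Fin n) ℤ))
    rw [← hps]
    apply Finset.prod_congr rfl
    intro j _
    rw [show (1 + MvPolynomial.X j : MvPolynomial (Fin n) ℤ) = MvPolynomial.X j + 1 from
      add_comm _ _, add_pow]
    apply Finset.sum_congr rfl
    intro i _
    simp [MvPolynomial.C_eq_coe_nat, mul_comm]
  · intro x hx hnx
    have : ∃ j, ¬ x j < k.1 j + 1 := by
      by_contra h
      push_neg at h
      exact hnx (Fintype.mem_piFinset.mpr (fun j => Finset.mem_range.mpr (h j)))
    obtain ⟨j, hj⟩ := this
    have : (k.1 j).choose (x j) = 0 := Nat.choose_eq_zero_of_lt (by omega)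
    have hz : (∏ j, (k.1 j).choose (x j)) = 0 := Finset.prod_eq_zero (Finset.mem_univ j) this
    rw [hz]
    simp

/-- If the finite `R ⊆ ℕ^n` satisfies the monomial condition and `p ∈ ℕ`, then for every
`k ∈ R`, `∑_{k' ∈ R} ((L_R)^p)_{k,k'} x^{k'} = ∏ j (p + x_j)^{k_j}` in `ℤ[x_1,…,x_n]`. -/
theorem stmt10 (n : ℕ) (R : Finset (Fin n → ℕ))
    (hR : ∀ k ∈ R, ∀ i : Fin n → ℕ, (∀ j, i j ≤ k j) → i ∈ R) (p : ℕ) (k : R) :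
    ∑ k' : R,
        MvPolynomial.C
          (((Matrix.of fun a b : R => ((∏ j, (a.1 j).choose (b.1 j) : ℕ) : ℤ)) ^ p) k k') *
          ∏ j, MvPolynomial.X j ^ k'.1 j =
      (∏ j, (MvPolynomial.C (p : ℤ) + MvPolynomial.X j) ^ k.1 j :
        MvPolynomial (Fin n) ℤ) := by
  classical
  induction p generalizing k with
  | zero =>
    simp only [pow_zero, Matrix.one_apply, Nat.cast_zero, map_zero, zero_add]
    rw [Finset.sum_eq_single k]
    · simp
    · intro b _ hb
      simp [Ne.symm hb]
    · simp
  | succ p ih =>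
    set L := (Matrix.of fun a b : R => ((∏ j, (a.1 j).choose (b.1 j) : ℕ) : ℤ)) with hL
    have hpow : ∀ a b : R, (L ^ (p + 1)) a b = ∑ c : R, (L ^ p) a c * L c b := by
      intro a b
      rw [pow_succ, Matrix.mul_apply]
    calc ∑ k' : R, MvPolynomial.C ((L ^ (p+1)) k k') * ∏ j, MvPolynomial.X j ^ k'.1 j
        = ∑ k' : R, ∑ c : R, MvPolynomial.C ((L ^ p) k c) *
            (MvPolynomial.C (L c k') * ∏ j, MvPolynomial.X j ^ k'.1 j) := by
          apply Finset.sum_congr rfl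
          intro k' _
          rw [hpow, map_sum, Finset.sum_mul]
          apply Finset.sum_congr rfl
          intro c _
          rw [map_mul, mul_assoc]
      _ = ∑ c : R, MvPolynomial.C ((L ^ p) k c) *
            ∑ k' : R, MvPolynomial.C (L c k') * ∏ j, MvPolynomial.X j ^ k'.1 j := by
          rw [Finset.sum_comm]
          simp [Finset.mul_sum]
      _ = ∑ c : R, MvPolynomial.C ((L ^ p) k c) * ∏ j, (1 + MvPolynomial.X j) ^ c.1 j := by
          apply Finset.sum_congr rfl
          intro c _
          congr 1
          simp only [hL, Matrix.of_apply]
          exact key10 n R hR c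
      _ = MvPolynomial.aeval (R := ℤ) (fun j : Fin n => (1 + MvPolynomial.X j : MvPolynomial (Fin n) ℤ))
            (∑ k' : R, MvPolynomial.C ((L ^ p) k k') * ∏ j, MvPolynomial.X j ^ k'.1 j) := by
          rw [map_sum]
          apply Finset.sum_congr rfl
          intro c _
          simp only [map_mul, map_prod, map_pow, MvPolynomial.aeval_X,
            MvPolynomial.aeval_C, algebraMap_int_eq, Polynomial.eval₂_at_one, eq_intCast,
            Int.cast_id, MvPolynomial.C_eq_coe_nat]
          congr 1
          simp
      _ = ∏ j, (MvPolynomial.C ((p+1 : ℕ) : ℤ) + MvPolynomial.X j) ^ k.1 j := by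
          rw [ih k, map_prod]
          apply Finset.prod_congr rfl
          intro j _
          rw [map_pow, map_add, MvPolynomial.aeval_C, MvPolynomial.aeval_X]
          ring_nf
          congr 1
          simp [algebraMap_int_eq]
          ring
end

section
/- Let R ⊆ ℕ^n be a finite set satisfying the monomial condition and let p ∈ ℕ. Then for all k, k' ∈ R, the (k,k')-entry of the matrix power (L_R)^p equals p^{|k| - |k'|} · C(k,k') if k' ≤ k, and equals 0 otherwise. -/
lemma key1 (p a b : ℕ) :
    ∑ m ∈ Finset.range (a+1), (p:ℤ)^(a-m) * (a.choose m) * (m.choose b)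
      = if b ≤ a then ((p:ℤ)+1)^(a-b) * (a.choose b) else 0 := by
  split_ifs with h
  · rw [Finset.range_eq_Ico, ← Finset.sum_Ico_consecutive _ (Nat.zero_le b) (by omega : b ≤ a+1)]
    have h1 : ∑ m ∈ Finset.Ico 0 b, (p:ℤ)^(a-m) * (a.choose m) * (m.choose b) = 0 := by
      apply Finset.sum_eq_zero
      intro m hm
      simp only [Finset.mem_Ico] at hm
      rw [Nat.choose_eq_zero_of_lt hm.2]
      simp
    rw [h1, zero_add, Finset.sum_Ico_eq_sum_range]
    have h2 : a + 1 - b = (a - b) + 1 := by omega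
    rw [h2]
    have h3 : ∀ t ∈ Finset.range (a - b + 1),
        (p:ℤ)^(a-(b+t)) * (a.choose (b+t)) * ((b+t).choose b)
        = (a.choose b : ℤ) * ((p:ℤ)^((a-b)-t) * ((a-b).choose t)) := by
      intro t ht
      simp only [Finset.mem_range] at ht
      have hba : b + t ≤ a := by omega
      have := Nat.choose_mul (n := a) (Nat.le_add_right b t)
      have h4 : b + t - b = t := by omega
      rw [h4] at this
      have h5 : a - (b + t) = (a - b) - t := by omega
      rw [h5, mul_assoc]
      rw [show ((a.choose (b+t)) : ℤ) * ((b+t).choose b) = ((a.choose (b+t) * (b+t).choose b : ℕ) : ℤ) by push_cast; ring, this]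
      push_cast
      ring
    rw [Finset.sum_congr rfl h3, ← Finset.mul_sum]
    have h6 : ∑ t ∈ Finset.range (a - b + 1), (p:ℤ)^((a-b)-t) * ((a-b).choose t)
        = ((p:ℤ)+1)^(a-b) := by
      rw [add_pow]
      rw [← Finset.sum_range_reflect]
      apply Finset.sum_congr rfl
      intro t ht
      simp only [Finset.mem_range] at ht
      have e1 : a - b + 1 - 1 - t = a - b - t := by omega
      have e2 : a - b - (a - b - t) = t := by omega
      rw [e1, e2, Nat.choose_symm (by omega : t ≤ a - b)]
      ring
    rw [h6]; ring
  · apply Finset.sum_eq_zero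
    intro m hm
    simp only [Finset.mem_range] at hm
    rw [Nat.choose_eq_zero_of_lt (show m < b by omega)]
    simp

lemma sum_tsub' {n : ℕ} (k k' : Fin n → ℕ) (h : ∀ j, k' j ≤ k j) :
    ∑ j, (k j - k' j) = ∑ j, k j - ∑ j, k' j := by
  have h1 : ∑ j, (k j - k' j) + ∑ j, k' j = ∑ j, k j := by
    rw [← Finset.sum_add_distrib]
    exact Finset.sum_congr rfl fun j _ => Nat.sub_add_cancel (h j)
  have h2 : ∑ j, k' j ≤ ∑ j, k j := Finset.sum_le_sum fun j _ => h j
  omega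

/-- If the finite `R ⊆ ℕ^n` satisfies the monomial condition and `p ∈ ℕ`, then the
`(k,k')`-entry of `(L_R)^p` is `p^{|k|-|k'|} C(k,k')` if `k' ≤ k` and `0` otherwise. -/
theorem stmt11 (n : ℕ) (R : Finset (Fin n → ℕ))
    (hR : ∀ k ∈ R, ∀ i : Fin n → ℕ, (∀ j, i j ≤ k j) → i ∈ R) (p : ℕ) (k k' : R) :
    ((Matrix.of fun a b : R => ((∏ j, (a.1 j).choose (b.1 j) : ℕ) : ℤ)) ^ p) k k' =
      if ∀ j, k'.1 j ≤ k.1 j then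
        (p : ℤ) ^ (∑ j, k.1 j - ∑ j, k'.1 j) * ((∏ j, (k.1 j).choose (k'.1 j) : ℕ) : ℤ)
      else 0 := by
  induction p generalizing k k' with
  | zero =>
    rw [pow_zero, Matrix.one_apply]
    by_cases hk : k = k'
    · subst hk
      simp [Nat.choose_self]
    · rw [if_neg hk]
      split_ifs with h
      · have hne : k'.1 ≠ k.1 := fun hh => hk (Subtype.ext hh.symm)
        obtain ⟨j0, hj0⟩ := Function.ne_iff.mp hne
        have hlt : ∑ j, k'.1 j < ∑ j, k.1 j :=
          Finset.sum_lt_sum (fun j _ => h j) ⟨j0, Finset.mem_univ _, lt_of_le_of_ne (h j0) hj0⟩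
        rw [Nat.cast_zero, zero_pow (by omega), zero_mul]
      · rfl
  | succ p ih =>
    rw [pow_succ, Matrix.mul_apply]
    simp only [ih, Matrix.of_apply]
    have key : ∀ m : R,
        (if ∀ j, m.1 j ≤ k.1 j then
          (p : ℤ) ^ (∑ j, k.1 j - ∑ j, m.1 j) * ((∏ j, (k.1 j).choose (m.1 j) : ℕ) : ℤ)
        else 0) * ((∏ j, (m.1 j).choose (k'.1 j) : ℕ) : ℤ)
        = if ∀ j, m.1 j ≤ k.1 j then
            ∏ j, ((p:ℤ)^(k.1 j - m.1 j) * ((k.1 j).choose (m.1 j)) * ((m.1 j).choose (k'.1 j)))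
          else 0 := by
      intro m
      split_ifs with h
      · rw [Finset.prod_mul_distrib, Finset.prod_mul_distrib]
        rw [← sum_tsub' k.1 m.1 h]
        push_cast
        rw [Finset.prod_pow_eq_pow_sum]
      · rw [zero_mul]
    simp_rw [key]
    clear key ih
    have hBR : Fintype.piFinset (fun j => Finset.range (k.1 j + 1)) ⊆ R := by
      intro x hx
      rw [Fintype.mem_piFinset] at hx
      have hall : ∀ j, x j ≤ k.1 j := by
        intro j
        have := hx j
        simp only [Finset.mem_range] at this
        omega
      exact hR k.1 k.2 x hall
    have h0 : ∀ x ∈ R, x ∉ Fintype.piFinset (fun j => Finset.range (k.1 j + 1)) →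
        (if ∀ j, x j ≤ k.1 j then
            ∏ j, ((p:ℤ)^(k.1 j - x j) * ((k.1 j).choose (x j)) * ((x j).choose (k'.1 j)))
          else 0) = 0 := by
      intro x hx hxB
      rw [if_neg]
      intro hc
      refine hxB ?_
      rw [Fintype.mem_piFinset]
      intro j
      simp only [Finset.mem_range]
      have := hc j
      omega
    have hconv : ∑ m : R, (if ∀ j, m.1 j ≤ k.1 j then
            ∏ j, ((p:ℤ)^(k.1 j - m.1 j) * ((k.1 j).choose (m.1 j)) * ((m.1 j).choose (k'.1 j)))
          else 0)
        = ∑ x ∈ R, (if ∀ j, x j ≤ k.1 j then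
            ∏ j, ((p:ℤ)^(k.1 j - x j) * ((k.1 j).choose (x j)) * ((x j).choose (k'.1 j)))
          else 0) :=
      Finset.sum_coe_sort R (fun x => if ∀ j, x j ≤ k.1 j then
            ∏ j, ((p:ℤ)^(k.1 j - x j) * ((k.1 j).choose (x j)) * ((x j).choose (k'.1 j)))
          else 0)
    rw [hconv, ← Finset.sum_subset hBR h0]
    have heq : ∀ x ∈ Fintype.piFinset (fun j => Finset.range (k.1 j + 1)),
        (if ∀ j, x j ≤ k.1 j then
            ∏ j, ((p:ℤ)^(k.1 j - x j) * ((k.1 j).choose (x j)) * ((x j).choose (k'.1 j)))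
          else 0)
        = ∏ j, ((p:ℤ)^(k.1 j - x j) * ((k.1 j).choose (x j)) * ((x j).choose (k'.1 j))) := by
      intro x hx
      rw [Fintype.mem_piFinset] at hx
      have hall : ∀ j, x j ≤ k.1 j := by
        intro j
        exact Nat.lt_succ_iff.mp (Finset.mem_range.mp (hx j))
      exact if_pos hall
    rw [Finset.sum_congr rfl heq,
      ← Finset.prod_univ_sum (fun j => Finset.range (k.1 j + 1))
        (fun j y => (p:ℤ)^(k.1 j - y) * ((k.1 j).choose y) * (y.choose (k'.1 j)))]
    have hj : ∀ j : Fin n, ∑ y ∈ Finset.range (k.1 j + 1),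
          ((p:ℤ)^(k.1 j - y) * ((k.1 j).choose y) * ((y).choose (k'.1 j)))
        = if k'.1 j ≤ k.1 j then ((p:ℤ)+1)^(k.1 j - k'.1 j) * ((k.1 j).choose (k'.1 j)) else 0 :=
      fun j => key1 p (k.1 j) (k'.1 j)
    rw [Finset.prod_congr rfl fun j _ => hj j]
    split_ifs with h
    · rw [Finset.prod_congr rfl fun j (_ : j ∈ Finset.univ) => if_pos (h j)]
      rw [Finset.prod_mul_distrib, Finset.prod_pow_eq_pow_sum, sum_tsub' k.1 k'.1 h]
      push_cast
      ring
    · push_neg at h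
      obtain ⟨j0, hj0⟩ := h
      exact Finset.prod_eq_zero (Finset.mem_univ j0) (if_neg (not_le.mpr hj0))
end

section
/- Let R ⊆ ℕ^n be a finite set satisfying the monomial condition and let p ∈ ℕ. Then (L_R)^p ≡ I (mod p): for all k, k' ∈ R, the integer p divides ((L_R)^p)_{k,k'} − δ_{k,k'}, where δ_{k,k'} = 1 if k = k' and 0 otherwise. -/
open Finset

lemma one_dim (m a b : ℕ) :
    ∑ c ∈ Finset.Iic a, ((a.choose c : ℤ) * (c.choose b : ℤ)) * (m : ℤ) ^ (c - b)
      = (a.choose b : ℤ) * ((m : ℤ) + 1) ^ (a - b) := by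
  rcases le_or_gt b a with hba | hab
  · have hIic : Finset.Iic a = Finset.range (a + 1) := by
      ext c; simp [Nat.lt_succ_iff]
    rw [hIic, Finset.range_eq_Ico, ← Finset.sum_Ico_consecutive _ (Nat.zero_le b)
      (by omega : b ≤ a + 1)]
    have h1 : ∑ c ∈ Finset.Ico 0 b, ((a.choose c : ℤ) * (c.choose b : ℤ)) * (m : ℤ) ^ (c - b) = 0 := by
      apply Finset.sum_eq_zero
      intro c hc
      simp only [Finset.mem_Ico] at hc
      rw [Nat.choose_eq_zero_of_lt hc.2]
      simp
    rw [h1, zero_add, Finset.sum_Ico_eq_sum_range]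
    have h2 : a + 1 - b = (a - b) + 1 := by omega
    rw [h2]
    have h3 : ∀ d ∈ Finset.range ((a - b) + 1),
        ((a.choose (b + d) : ℤ) * ((b + d).choose b : ℤ)) * (m : ℤ) ^ (b + d - b)
          = (a.choose b : ℤ) * (((a - b).choose d : ℤ) * (m : ℤ) ^ d) := by
      intro d hd
      simp only [Finset.mem_range, Nat.lt_succ_iff] at hd
      have hbd : b + d ≤ a := by omega
      have := Nat.choose_mul (n := a) (Nat.le_add_right b d)
      have hcast : ((a.choose (b + d) * (b + d).choose b : ℕ) : ℤ)
          = ((a.choose b * (a - b).choose (b + d - b) : ℕ) : ℤ) := by rw [this]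
      push_cast at hcast
      rw [← mul_assoc, hcast]
      simp only [Nat.add_sub_cancel_left]
    rw [Finset.sum_congr rfl h3, ← Finset.mul_sum]
    congr 1
    rw [add_pow (m : ℤ) 1 (a - b)]
    apply Finset.sum_congr rfl
    intro d hd
    simp [mul_comm]
  · have h1 : ∀ c ∈ Finset.Iic a, ((a.choose c : ℤ) * (c.choose b : ℤ)) * (m : ℤ) ^ (c - b) = 0 := by
      intro c hc
      simp only [Finset.mem_Iic] at hc
      rw [Nat.choose_eq_zero_of_lt (lt_of_le_of_lt hc hab)]
      simp
    rw [Finset.sum_eq_zero h1, Nat.choose_eq_zero_of_lt hab]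
    simp

/-- If the finite `R ⊆ ℕ^n` satisfies the monomial condition and `p ∈ ℕ`, then
`(L_R)^p ≡ I (mod p)`: `p` divides every entry of `(L_R)^p - I`. -/
theorem stmt12 (n : ℕ) (R : Finset (Fin n → ℕ))
    (hR : ∀ k ∈ R, ∀ i : Fin n → ℕ, (∀ j, i j ≤ k j) → i ∈ R) (p : ℕ) (k k' : R) :
    (p : ℤ) ∣
      ((Matrix.of fun a b : R => ((∏ j, (a.1 j).choose (b.1 j) : ℕ) : ℤ)) ^ p) k k' -
        (if k = k' then 1 else 0) := by
  set L : Matrix R R ℤ := Matrix.of fun a b : R => ((∏ j, (a.1 j).choose (b.1 j) : ℕ) : ℤ) with hL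
  have key : ∀ (m : ℕ) (a b : R), (L ^ m) a b
      = ((∏ j, (a.1 j).choose (b.1 j) : ℕ) : ℤ) * (m : ℤ) ^ (∑ j, (a.1 j - b.1 j)) := by
    intro m
    induction m with
    | zero =>
      intro a b
      by_cases hab : a = b
      · subst hab
        simp [Matrix.one_apply]
      · simp only [pow_zero, Matrix.one_apply_ne hab, Nat.cast_zero]
        by_cases hle : ∀ j, b.1 j ≤ a.1 j
        · have hne : ∃ j, a.1 j ≠ b.1 j := by
            by_contra h
            push_neg at h
            exact hab (Subtype.ext (funext h))
          obtain ⟨j0, hj0⟩ := hne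
          have hle0 := hle j0
          have hpos : 0 < ∑ j, (a.1 j - b.1 j) := by
            apply Finset.sum_pos' (fun j _ => Nat.zero_le _)
            exact ⟨j0, Finset.mem_univ _, by omega⟩
          rw [zero_pow (by omega), mul_zero]
        · push_neg at hle
          obtain ⟨j0, hj0⟩ := hle
          have : (a.1 j0).choose (b.1 j0) = 0 := Nat.choose_eq_zero_of_lt hj0
          rw [Finset.prod_eq_zero (Finset.mem_univ j0) this]
          simp
    | succ m ih =>
      intro a b
      rw [pow_succ', Matrix.mul_apply]
      have step : ∀ i : R, L a i * (L ^ m) i b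
          = if (i : Fin n → ℕ) ∈ Fintype.piFinset (fun j => Finset.Iic (a.1 j)) then
              ∏ j, ((a.1 j).choose (i.1 j) : ℤ) * ((i.1 j).choose (b.1 j) : ℤ) * (m : ℤ) ^ (i.1 j - b.1 j)
            else 0 := by
        intro i
        rw [ih i b, hL]
        by_cases hi : (i : Fin n → ℕ) ∈ Fintype.piFinset (fun j => Finset.Iic (a.1 j))
        · rw [if_pos hi]
          simp only [Matrix.of_apply]
          push_cast
          rw [← Finset.prod_pow_eq_pow_sum, ← Finset.prod_mul_distrib, ← Finset.prod_mul_distrib]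
          exact Finset.prod_congr rfl fun j _ => by ring
        · rw [if_neg hi]
          simp only [Fintype.mem_piFinset, Finset.mem_Iic] at hi
          push_neg at hi
          obtain ⟨j0, hj0⟩ := hi
          have : (a.1 j0).choose (i.1 j0) = 0 := Nat.choose_eq_zero_of_lt hj0
          simp only [Matrix.of_apply]
          rw [Finset.prod_eq_zero (Finset.mem_univ j0) (by exact_mod_cast congrArg (Nat.cast (R := ℤ)) this)]
          simp
      rw [Finset.sum_congr rfl (fun i _ => step i)]
      have hsub : Fintype.piFinset (fun j => Finset.Iic (a.1 j)) ⊆ R := by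
        intro i hi
        simp only [Fintype.mem_piFinset, Finset.mem_Iic] at hi
        exact hR a.1 a.2 i hi
      rw [Finset.sum_coe_sort R (fun i => if i ∈ Fintype.piFinset (fun j => Finset.Iic (a.1 j)) then
              ∏ j, ((a.1 j).choose (i j) : ℤ) * ((i j).choose (b.1 j) : ℤ) * (m : ℤ) ^ (i j - b.1 j)
            else 0)]
      rw [Finset.sum_ite_mem, Finset.inter_eq_right.mpr hsub]
      have hfac := Finset.prod_univ_sum (fun j => Finset.Iic (a.1 j))
        (fun j c => ((a.1 j).choose c : ℤ) * ((c).choose (b.1 j) : ℤ) * (m : ℤ) ^ (c - b.1 j))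
      rw [← hfac]
      have hcoord : ∀ j : Fin n, ∑ c ∈ Finset.Iic (a.1 j),
          ((a.1 j).choose c : ℤ) * ((c).choose (b.1 j) : ℤ) * (m : ℤ) ^ (c - b.1 j)
            = ((a.1 j).choose (b.1 j) : ℤ) * ((m : ℤ) + 1) ^ (a.1 j - b.1 j) :=
        fun j => one_dim m (a.1 j) (b.1 j)
      rw [Finset.prod_congr rfl (fun j _ => hcoord j), Finset.prod_mul_distrib,
        Finset.prod_pow_eq_pow_sum]
      push_cast
      ring
  have hk := key p k k'
  rw [hk]
  by_cases hkk : k = k'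
  · subst hkk
    simp
  · rw [if_neg hkk]
    by_cases hle : ∀ j, k'.1 j ≤ k.1 j
    · have hne : ∃ j, k.1 j ≠ k'.1 j := by
        by_contra h
        push_neg at h
        exact hkk (Subtype.ext (funext h))
      obtain ⟨j0, hj0⟩ := hne
      have hle0 := hle j0
      have hpos : 0 < ∑ j, (k.1 j - k'.1 j) := by
        apply Finset.sum_pos' (fun j _ => Nat.zero_le _)
        exact ⟨j0, Finset.mem_univ _, by omega⟩
      obtain ⟨e, he⟩ : ∃ e, ∑ j, (k.1 j - k'.1 j) = e + 1 := ⟨_, (Nat.succ_pred_eq_of_pos hpos).symm⟩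
      rw [he, pow_succ, sub_zero]
      exact ⟨((∏ j, (k.1 j).choose (k'.1 j) : ℕ) : ℤ) * (p : ℤ) ^ e, by ring⟩
    · push_neg at hle
      obtain ⟨j0, hj0⟩ := hle
      have : (k.1 j0).choose (k'.1 j0) = 0 := Nat.choose_eq_zero_of_lt hj0
      rw [Finset.prod_eq_zero (Finset.mem_univ j0) this]
      simp
end

section
/- Let R ⊆ ℕ^n be a finite set satisfying the monomial condition. Define the real matrix A_R indexed by R × R by (A_R)_{k,k'} = C(k,k') if |k| = |k'| + 1 and (A_R)_{k,k'} = 0 otherwise. Then for every p ∈ ℕ, the real Pascal matrix L_R satisfies (L_R)^p = exp(p · A_R), where exp denotes the matrix exponential. -/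
private lemma prod_choose_eq_zero {n : ℕ} {a b : Fin n → ℕ} (h : ¬ ∀ j, b j ≤ a j) :
    ∏ j, (a j).choose (b j) = 0 := by
  push_neg at h
  obtain ⟨j, hj⟩ := h
  exact Finset.prod_eq_zero (Finset.mem_univ j) (Nat.choose_eq_zero_of_lt hj)

private lemma eq_update_of_sum_succ {n : ℕ} {a b : Fin n → ℕ} (hle : ∀ j, b j ≤ a j)
    (hsum : ∑ j, a j = (∑ j, b j) + 1) : ∃ i, a = Function.update b i (b i + 1) := by
  have hsub : ∑ j, (a j - b j) = 1 := by
    rw [Finset.sum_tsub_distrib _ (fun j _ => hle j)]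
    omega
  obtain ⟨i, _, hi⟩ := Finset.exists_ne_zero_of_sum_ne_zero
    (show ∑ j, (a j - b j) ≠ 0 by rw [hsub]; norm_num)
  have hsplit : a i - b i + ∑ l ∈ Finset.univ.erase i, (a l - b l) = 1 := by
    rw [Finset.add_sum_erase Finset.univ (fun j => a j - b j) (Finset.mem_univ i), hsub]
  have h2 : 1 ≤ a i - b i := by omega
  have h3 : ∑ l ∈ Finset.univ.erase i, (a l - b l) = 0 := by omega
  have hzero : ∀ l ∈ Finset.univ.erase i, a l - b l = 0 := Finset.sum_eq_zero_iff.mp h3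
  refine ⟨i, funext fun l => ?_⟩
  rcases eq_or_ne l i with rfl | hne
  · rw [Function.update_self]
    have := hle l
    omega
  · rw [Function.update_of_ne hne]
    have := hzero l (Finset.mem_erase.mpr ⟨hne, Finset.mem_univ l⟩)
    have := hle l
    omega

private lemma sum_update_succ {n : ℕ} (b : Fin n → ℕ) (i : Fin n) :
    ∑ j, Function.update b i (b i + 1) j = (∑ j, b j) + 1 := by
  rw [Finset.sum_update_of_mem (Finset.mem_univ i),
    ← Finset.add_sum_erase Finset.univ b (Finset.mem_univ i), Finset.sdiff_singleton_eq_erase]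
  omega

private lemma prod_choose_update_self {n : ℕ} (b : Fin n → ℕ) (i : Fin n) :
    ∏ l, (Function.update b i (b i + 1) l).choose (b l) = b i + 1 := by
  rw [Finset.prod_eq_single i]
  · rw [Function.update_self, Nat.choose_succ_self_right]
  · intro l _ hl
    rw [Function.update_of_ne hl, Nat.choose_self]
  · intro h
    exact absurd (Finset.mem_univ i) h

private lemma prod_choose_update {n : ℕ} (a b : Fin n → ℕ) (i : Fin n) :
    ∏ l, (a l).choose (Function.update b i (b i + 1) l) =
      (a i).choose (b i + 1) * ∏ l ∈ Finset.univ.erase i, (a l).choose (b l) := by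
  rw [← Finset.mul_prod_erase Finset.univ _ (Finset.mem_univ i), Function.update_self]
  congr 1
  exact Finset.prod_congr rfl fun l hl => by rw [Function.update_of_ne (Finset.mem_erase.mp hl).1]

private lemma key_id {n : ℕ} (a b : Fin n → ℕ) :
    ∑ i, ((∏ l, (a l).choose (Function.update b i (b i + 1) l) : ℕ) : ℝ) * ((b i : ℝ) + 1) =
      (((∑ l, a l : ℕ) : ℝ) - ((∑ l, b l : ℕ) : ℝ)) * ((∏ l, (a l).choose (b l) : ℕ) : ℝ) := by
  by_cases hba : ∀ l, b l ≤ a l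
  · have hterm : ∀ i, ((∏ l, (a l).choose (Function.update b i (b i + 1) l) : ℕ) : ℝ) *
        ((b i : ℝ) + 1) =
        (((a i : ℕ) : ℝ) - ((b i : ℕ) : ℝ)) * ((∏ l, (a l).choose (b l) : ℕ) : ℝ) := by
      intro i
      have hN : (∏ l, (a l).choose (Function.update b i (b i + 1) l)) * (b i + 1)
          = (a i - b i) * ∏ l, (a l).choose (b l) := by
        rw [prod_choose_update,
          ← Finset.mul_prod_erase Finset.univ (fun l => (a l).choose (b l)) (Finset.mem_univ i),
          mul_right_comm, Nat.choose_succ_right_eq]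
        ring
      calc ((∏ l, (a l).choose (Function.update b i (b i + 1) l) : ℕ) : ℝ) * ((b i : ℝ) + 1)
          = (((∏ l, (a l).choose (Function.update b i (b i + 1) l)) * (b i + 1) : ℕ) : ℝ) := by
            push_cast; ring
        _ = (((a i - b i) * ∏ l, (a l).choose (b l) : ℕ) : ℝ) := by rw [hN]
        _ = (((a i : ℕ) : ℝ) - ((b i : ℕ) : ℝ)) * ((∏ l, (a l).choose (b l) : ℕ) : ℝ) := by
            rw [Nat.cast_mul, Nat.cast_sub (hba i)]
    rw [Finset.sum_congr rfl (fun i _ => hterm i), ← Finset.sum_mul]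
    congr 1
    push_cast
    rw [Finset.sum_sub_distrib]
  · push_neg at hba
    obtain ⟨l₀, hl₀⟩ := hba
    have hRHS : ∏ l, (a l).choose (b l) = 0 :=
      prod_choose_eq_zero (by push_neg; exact ⟨l₀, hl₀⟩)
    rw [hRHS, Nat.cast_zero, mul_zero]
    apply Finset.sum_eq_zero
    intro i _
    have hz : ∏ l, (a l).choose (Function.update b i (b i + 1) l) = 0 := by
      apply prod_choose_eq_zero
      push_neg
      refine ⟨l₀, lt_of_lt_of_le hl₀ ?_⟩
      rcases eq_or_ne l₀ i with rfl | h
      · rw [Function.update_self]; omega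
      · rw [Function.update_of_ne h]
    rw [hz, Nat.cast_zero, zero_mul]

private lemma middle_sum {n : ℕ} (R : Finset (Fin n → ℕ))
    (hR : ∀ k ∈ R, ∀ i : Fin n → ℕ, (∀ j, i j ≤ k j) → i ∈ R) (a b : Fin n → ℕ)
    (ha : a ∈ R) (c : ℝ) :
    ∑ v ∈ R, (if (∑ j, v j) = (∑ j, b j) + 1 then
        c * ((∏ j, (a j).choose (v j) : ℕ) : ℝ) * ((∏ j, (v j).choose (b j) : ℕ) : ℝ) else 0)
      = c * ((((∑ j, a j : ℕ) : ℝ) - ((∑ j, b j : ℕ) : ℝ)) *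
          ((∏ j, (a j).choose (b j) : ℕ) : ℝ)) := by
  classical
  set g : Fin n → (Fin n → ℕ) := fun i => Function.update b i (b i + 1) with hg
  have hginj : Function.Injective g := by
    intro i i' hii
    by_contra hne
    have h1 : g i i = g i' i := congrFun hii i
    rw [show g i i = b i + 1 from Function.update_self _ _ _,
      show g i' i = b i from Function.update_of_ne hne _ _] at h1
    omega
  set G : (Fin n → ℕ) → ℝ := fun v => if (∑ j, v j) = (∑ j, b j) + 1 then
      c * ((∏ j, (a j).choose (v j) : ℕ) : ℝ) * ((∏ j, (v j).choose (b j) : ℕ) : ℝ) else 0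
    with hG
  have h1 : ∑ v ∈ R, G v = ∑ v ∈ R ∪ Finset.image g Finset.univ, G v := by
    apply Finset.sum_subset Finset.subset_union_left
    intro v hv hvn
    have hvi : v ∈ Finset.image g Finset.univ := by
      rcases Finset.mem_union.mp hv with h | h
      · exact absurd h hvn
      · exact h
    obtain ⟨i, _, rfl⟩ := Finset.mem_image.mp hvi
    have hnk : ¬ ∀ j, g i j ≤ a j := fun hle => hvn (hR a ha (g i) hle)
    have hz : ∏ j, (a j).choose (g i j) = 0 := prod_choose_eq_zero hnk
    simp only [hG]
    simp only [hz, Nat.cast_zero, mul_zero, zero_mul, ite_self]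
  have h2 : ∑ v ∈ Finset.image g Finset.univ, G v
      = ∑ v ∈ R ∪ Finset.image g Finset.univ, G v := by
    apply Finset.sum_subset Finset.subset_union_right
    intro v hv hvn
    simp only [hG]
    split_ifs with hc
    · by_cases hle : ∀ j, b j ≤ v j
      · obtain ⟨i, rfl⟩ := eq_update_of_sum_succ hle hc
        exact absurd (Finset.mem_image.mpr ⟨i, Finset.mem_univ i, rfl⟩) hvn
      · rw [prod_choose_eq_zero hle, Nat.cast_zero, mul_zero]
    · rfl
  have h3 : ∀ i, G (g i) =
      c * (((∏ l, (a l).choose (Function.update b i (b i + 1) l) : ℕ) : ℝ) * ((b i : ℝ) + 1)) := by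
    intro i
    simp only [hG]
    have hcond : (∑ j, g i j) = (∑ j, b j) + 1 := sum_update_succ b i
    rw [if_pos hcond]
    have hps : ∏ j, (g i j).choose (b j) = b i + 1 := prod_choose_update_self b i
    rw [hps]
    push_cast
    ring
  rw [h1, ← h2, Finset.sum_image (fun i _ i' _ h => hginj h),
    Finset.sum_congr rfl (fun i _ => h3 i), ← Finset.mul_sum, key_id a b]

private lemma pow_formula (n : ℕ) (R : Finset (Fin n → ℕ))
    (hR : ∀ k ∈ R, ∀ i : Fin n → ℕ, (∀ j, i j ≤ k j) → i ∈ R) (m : ℕ) :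
    (Matrix.of fun k k' : R =>
        if (∑ j, k.1 j) = (∑ j, k'.1 j) + 1 then ((∏ j, (k.1 j).choose (k'.1 j) : ℕ) : ℝ)
        else 0) ^ m =
      Matrix.of fun k k' : R =>
        if (∑ j, k.1 j) = (∑ j, k'.1 j) + m then
          (m.factorial : ℝ) * ((∏ j, (k.1 j).choose (k'.1 j) : ℕ) : ℝ)
        else 0 := by
  classical
  induction m with
  | zero =>
    ext k k'
    rw [pow_zero, Matrix.one_apply, Matrix.of_apply]
    rcases eq_or_ne k k' with rfl | hne
    · simp [Nat.choose_self]
    · rw [if_neg hne]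
      by_cases hs : (∑ j, k.1 j) = (∑ j, k'.1 j) + 0
      · rw [if_pos hs]
        have hC : ∏ j, (k.1 j).choose (k'.1 j) = 0 := by
          apply prod_choose_eq_zero
          intro hle
          apply hne
          apply Subtype.ext
          funext j
          by_contra hj
          have hlt : k'.1 j < k.1 j := lt_of_le_of_ne (hle j) (Ne.symm hj)
          have hslt : (∑ l, k'.1 l) < ∑ l, k.1 l :=
            Finset.sum_lt_sum (fun l _ => hle l) ⟨j, Finset.mem_univ j, hlt⟩
          omega
        rw [hC]
        simp
      · rw [if_neg hs]
  | succ m ih =>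
    ext k k'
    rw [pow_succ, Matrix.mul_apply]
    simp only [ih, Matrix.of_apply]
    by_cases h : (∑ j, k.1 j) = (∑ j, k'.1 j) + (m + 1)
    · rw [if_pos h]
      have step1 : ∀ k'' : R,
          (if (∑ j, k.1 j) = (∑ j, k''.1 j) + m then
              (m.factorial : ℝ) * ((∏ j, (k.1 j).choose (k''.1 j) : ℕ) : ℝ) else 0) *
            (if (∑ j, k''.1 j) = (∑ j, k'.1 j) + 1 then
              ((∏ j, (k''.1 j).choose (k'.1 j) : ℕ) : ℝ) else 0) =
          (if (∑ j, k''.1 j) = (∑ j, k'.1 j) + 1 then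
            (m.factorial : ℝ) * ((∏ j, (k.1 j).choose (k''.1 j) : ℕ) : ℝ) *
              ((∏ j, (k''.1 j).choose (k'.1 j) : ℕ) : ℝ) else 0) := by
        intro k''
        split_ifs with h1 h2 h3
        · ring
        · ring
        · exact absurd (by omega) h1
        · ring
      rw [Finset.sum_congr rfl (fun k'' _ => step1 k'')]
      rw [show (∑ k'' : R, (if (∑ j, k''.1 j) = (∑ j, k'.1 j) + 1 then
            (m.factorial : ℝ) * ((∏ j, (k.1 j).choose (k''.1 j) : ℕ) : ℝ) *
              ((∏ j, (k''.1 j).choose (k'.1 j) : ℕ) : ℝ) else 0)) =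
          ∑ v ∈ R, (if (∑ j, v j) = (∑ j, k'.1 j) + 1 then
            (m.factorial : ℝ) * ((∏ j, (k.1 j).choose (v j) : ℕ) : ℝ) *
              ((∏ j, (v j).choose (k'.1 j) : ℕ) : ℝ) else 0) from
        Finset.sum_coe_sort R (fun v => if (∑ j, v j) = (∑ j, k'.1 j) + 1 then
            (m.factorial : ℝ) * ((∏ j, (k.1 j).choose (v j) : ℕ) : ℝ) *
              ((∏ j, (v j).choose (k'.1 j) : ℕ) : ℝ) else 0)]
      rw [middle_sum R hR k.1 k'.1 k.2 _]
      have hdiff : (((∑ j, k.1 j : ℕ) : ℝ) - ((∑ j, k'.1 j : ℕ) : ℝ)) = (m + 1 : ℝ) := by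
        rw [h]
        push_cast
        ring
      rw [hdiff, Nat.factorial_succ]
      push_cast
      ring
    · rw [if_neg h]
      apply Finset.sum_eq_zero
      intro k'' _
      split_ifs with h1 h2 h3
      · exact absurd (by omega) h
      · ring
      · ring
      · ring

/-- If the finite `R ⊆ ℕ^n` satisfies the monomial condition, and `A_R` is the real
matrix with `(k,k')`-entry `C(k,k')` when `|k| = |k'| + 1` and `0` otherwise, then
`(L_R)^p = exp(p • A_R)` for every `p ∈ ℕ`. -/
theorem stmt14 (n : ℕ) (R : Finset (Fin n → ℕ))
    (hR : ∀ k ∈ R, ∀ i : Fin n → ℕ, (∀ j, i j ≤ k j) → i ∈ R) (p : ℕ) :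
    (Matrix.of fun k k' : R => ((∏ j, (k.1 j).choose (k'.1 j) : ℕ) : ℝ)) ^ p =
      NormedSpace.exp
        ((p : ℝ) •
          Matrix.of fun k k' : R =>
            if (∑ j, k.1 j) = (∑ j, k'.1 j) + 1 then
              ((∏ j, (k.1 j).choose (k'.1 j) : ℕ) : ℝ)
            else 0) := by
  classical
  rw [Nat.cast_smul_eq_nsmul ℝ p, Matrix.exp_nsmul]
  congr 1
  set A := Matrix.of fun k k' : R =>
      if (∑ j, k.1 j) = (∑ j, k'.1 j) + 1 then
        ((∏ j, (k.1 j).choose (k'.1 j) : ℕ) : ℝ)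
      else 0 with hA
  have hexp : NormedSpace.exp A = ∑' m : ℕ, ((m.factorial : ℝ))⁻¹ • A ^ m :=
    congrFun (NormedSpace.exp_eq_tsum ℝ) A
  rw [hexp]
  obtain ⟨N, hNlt⟩ : ∃ N : ℕ, ∀ v ∈ R, (∑ j, v j) < N :=
    ⟨(R.sup fun v => ∑ j, v j) + 1, fun v hv =>
      Nat.lt_succ_of_le (by simpa using Finset.le_sup (f := fun v => ∑ j, v j) hv)⟩
  have hpow := pow_formula n R hR
  have hsupp : ∀ m ∉ Finset.range N, ((m.factorial : ℝ))⁻¹ • A ^ m = 0 := by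
    intro m hm
    rw [Finset.mem_range, not_lt] at hm
    rw [hA, hpow m]
    ext k k'
    rw [Matrix.smul_apply, Matrix.of_apply, if_neg, smul_zero]
    · rfl
    · have hk := hNlt k.1 k.2
      omega
  rw [tsum_eq_sum hsupp]
  ext k k'
  rw [Matrix.sum_apply]
  simp only [hA, hpow, Matrix.smul_apply, Matrix.of_apply, smul_eq_mul]
  have hterm : ∀ m, ((m.factorial : ℝ))⁻¹ *
      (if (∑ j, k.1 j) = (∑ j, k'.1 j) + m then
        (m.factorial : ℝ) * ((∏ j, (k.1 j).choose (k'.1 j) : ℕ) : ℝ) else 0) =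
      (if (∑ j, k.1 j) = (∑ j, k'.1 j) + m then
        ((∏ j, (k.1 j).choose (k'.1 j) : ℕ) : ℝ) else 0) := by
    intro m
    split_ifs
    · rw [← mul_assoc, inv_mul_cancel₀ (by exact_mod_cast m.factorial_ne_zero), one_mul]
    · rw [mul_zero]
  rw [Finset.sum_congr rfl (fun m _ => hterm m)]
  by_cases hle : (∑ j, k'.1 j) ≤ (∑ j, k.1 j)
  · rw [Finset.sum_eq_single_of_mem ((∑ j, k.1 j) - (∑ j, k'.1 j)) ?_ ?_]
    · rw [if_pos (by omega)]
    · rw [Finset.mem_range]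
      have hk := hNlt k.1 k.2
      omega
    · intro m _ hm
      rw [if_neg (by omega)]
  · rw [Finset.sum_eq_zero (fun m _ => by rw [if_neg (by omega)])]
    have hz : ∏ j, (k.1 j).choose (k'.1 j) = 0 :=
      prod_choose_eq_zero (fun hc => hle (Finset.sum_le_sum fun j _ => hc j))
    rw [hz, Nat.cast_zero]
end

section
/- For every integer p ∈ ℤ and every k' ∈ ℕ^n, the formal power series F_p,k' ∈ ℤ[[x_1,…,x_n]] whose coefficient of x^k is p^{|k| - |k'|} · C(k,k') when k' ≤ k and 0 otherwise, satisfies F_{p,k'} · ∏_{j=1}^n (1 - p·x_j)^{k'_j + 1} = x^{k'}; equivalently, the generating function of the k'-th column of the p-th power of the infinite multivariate Pascal matrix L equals (1/∏_{j=1}^n(1 - p x_j)) · ∏_{j=1}^n (x_j/(1 - p x_j))^{k'_j}, which expresses that L^p is the multivariate Riordan array R(1/∏_j(1-p z_j), z_1/(1-p z_1),…, z_n/(1-p z_n)). -/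
open MvPowerSeries Finsupp

namespace Stmt19Aux

variable {n : ℕ} (p : ℤ)

/-- The series with explicit coefficients. -/
def Fc (k' : Fin n → ℕ) : MvPowerSeries (Fin n) ℤ :=
  fun d => if ∀ j, k' j ≤ d j then
      p ^ (∑ j, d j - ∑ j, k' j) * ((∏ j, (d j).choose (k' j) : ℕ) : ℤ)
    else 0

lemma coeff_Fc (k' : Fin n → ℕ) (d : Fin n →₀ ℕ) :
    MvPowerSeries.coeff (R := ℤ) d (Fc p k') =
      if ∀ j, k' j ≤ d j then
        p ^ (∑ j, d j - ∑ j, k' j) * ((∏ j, (d j).choose (k' j) : ℕ) : ℤ)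
      else 0 := rfl

/-- series for the base case, supported on variables in `s`. -/
def Gs (s : Finset (Fin n)) : MvPowerSeries (Fin n) ℤ :=
  fun d => if ∀ j ∉ s, d j = 0 then p ^ (∑ j, d j) else 0

lemma coeff_Gs (s : Finset (Fin n)) (d : Fin n →₀ ℕ) :
    MvPowerSeries.coeff (R := ℤ) d (Gs p s) =
      if ∀ j ∉ s, d j = 0 then p ^ (∑ j, d j) else 0 := rfl

lemma coeff_mul_one_sub (φ : MvPowerSeries (Fin n) ℤ) (i : Fin n) (d : Fin n →₀ ℕ) :
    MvPowerSeries.coeff (R := ℤ) d (φ * (1 - MvPowerSeries.C (σ := Fin n) (R := ℤ) p * X i)) =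
      MvPowerSeries.coeff (R := ℤ) d φ -
        if Finsupp.single i 1 ≤ d then p * MvPowerSeries.coeff (R := ℤ) (d - Finsupp.single i 1) φ
        else 0 := by
  rw [mul_sub, mul_one, map_sub, mul_left_comm, coeff_C_mul, X_def, coeff_mul_monomial]
  split_ifs <;> ring

lemma coeff_X_mul' (φ : MvPowerSeries (Fin n) ℤ) (i : Fin n) (d : Fin n →₀ ℕ) :
    MvPowerSeries.coeff (R := ℤ) d (X i * φ) =
      if Finsupp.single i 1 ≤ d then MvPowerSeries.coeff (R := ℤ) (d - Finsupp.single i 1) φ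
      else 0 := by
  rw [X_def, coeff_monomial_mul]
  split_ifs <;> simp

lemma sum_single_apply (i : Fin n) : ∑ j, (Finsupp.single i 1 : Fin n →₀ ℕ) j = 1 := by
  simp [Finsupp.single_apply]

lemma sum_sub_single (d : Fin n →₀ ℕ) (i : Fin n) (h : Finsupp.single i 1 ≤ d) :
    ∑ j, (d - Finsupp.single i 1 : Fin n →₀ ℕ) j = (∑ j, d j) - 1 := by
  have h1 : (d - Finsupp.single i 1) + Finsupp.single i 1 = d := tsub_add_cancel_of_le h
  have h2 : ∑ j, d j = (∑ j, (d - Finsupp.single i 1 : Fin n →₀ ℕ) j)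
      + ∑ j, (Finsupp.single i 1 : Fin n →₀ ℕ) j := by
    rw [← Finset.sum_add_distrib]
    refine Finset.sum_congr rfl fun j _ => ?_
    conv_lhs => rw [← h1]
    simp
  rw [sum_single_apply] at h2
  omega

lemma aux_base (s : Finset (Fin n)) :
    Gs p s * ∏ j ∈ s, (1 - MvPowerSeries.C (σ := Fin n) (R := ℤ) p * X j) = 1 := by
  classical
  induction s using Finset.induction with
  | empty =>
    rw [Finset.prod_empty, mul_one]
    refine MvPowerSeries.ext fun d => ?_
    rw [coeff_one, coeff_Gs]
    by_cases hd : d = 0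
    · subst hd; simp
    · rw [if_neg hd, if_neg]
      intro h
      exact hd (Finsupp.ext fun j => h j (Finset.notMem_empty j))
  | @insert i s hi ih =>
    rw [Finset.prod_insert hi, ← mul_assoc]
    have key : Gs p (insert i s) * (1 - MvPowerSeries.C (σ := Fin n) (R := ℤ) p * X i) = Gs p s := by
      refine MvPowerSeries.ext fun d => ?_
      rw [coeff_mul_one_sub, coeff_Gs, coeff_Gs]
      by_cases h1 : Finsupp.single i 1 ≤ d
      · have hdi : 1 ≤ d i := Finsupp.single_le_iff.mp h1
        rw [if_pos h1, coeff_Gs]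
        have hsum : ∑ j, (d - Finsupp.single i 1 : Fin n →₀ ℕ) j = (∑ j, d j) - 1 :=
          sum_sub_single d i h1
        have hcond : (∀ j ∉ insert i s, (d - Finsupp.single i 1 : Fin n →₀ ℕ) j = 0) ↔
            (∀ j ∉ insert i s, d j = 0) := by
          constructor <;> intro h j hj
          · have hji : j ≠ i := fun he => hj (he ▸ Finset.mem_insert_self i s)
            have := h j hj
            rwa [Finsupp.tsub_apply, Finsupp.single_eq_of_ne hji, Nat.sub_zero] at this
          · have hji : j ≠ i := fun he => hj (he ▸ Finset.mem_insert_self i s)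
            rw [Finsupp.tsub_apply, Finsupp.single_eq_of_ne hji, Nat.sub_zero]
            exact h j hj
        rw [hsum]
        have hrhs : ¬(∀ j ∉ s, d j = 0) := fun h => by
          have := h i hi; omega
        rw [if_neg hrhs]
        by_cases hc : ∀ j ∉ insert i s, d j = 0
        · rw [if_pos hc, if_pos (hcond.mpr hc)]
          have hds : 1 ≤ ∑ j, d j :=
            le_trans hdi (Finset.single_le_sum (fun j _ => Nat.zero_le _) (Finset.mem_univ i))
          rw [← pow_succ']
          have he : (∑ j, d j - 1) + 1 = ∑ j, d j := by omega
          rw [he]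
          ring
        · rw [if_neg hc, if_neg (fun h => hc (hcond.mp h))]; ring
      · have hdi : d i = 0 := by
          have := Finsupp.single_le_iff.not.mp h1; omega
        rw [if_neg h1, sub_zero]
        congr 1
        rw [eq_iff_iff]
        constructor <;> intro h j hj
        · by_cases hji : j = i
          · subst hji; exact hdi
          · exact h j (by simp [hji, hj])
        · exact h j (fun hjs => hj (Finset.mem_insert_of_mem hjs))
    rw [key, ih]

lemma sum_update_sub (k' : Fin n → ℕ) (i : Fin n) (h : 1 ≤ k' i) :
    ∑ j, Function.update k' i (k' i - 1) j = (∑ j, k' j) - 1 := by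
  classical
  rw [Finset.sum_update_of_mem (Finset.mem_univ i)]
  rw [← Finset.add_sum_erase _ k' (Finset.mem_univ i), Finset.sdiff_singleton_eq_erase]
  omega

lemma step (k' : Fin n → ℕ) (i : Fin n) (hk : 1 ≤ k' i) :
    Fc p k' * (1 - MvPowerSeries.C (σ := Fin n) (R := ℤ) p * X i) =
      X i * Fc p (Function.update k' i (k' i - 1)) := by
  classical
  set k'' := Function.update k' i (k' i - 1) with hk''
  have hk''i : k'' i = k' i - 1 := Function.update_self i _ k'
  have hk''j : ∀ j ≠ i, k'' j = k' j := fun j hj => Function.update_of_ne hj _ k'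
  have hsumk'' : ∑ j, k'' j = (∑ j, k' j) - 1 := sum_update_sub k' i hk
  have hki : 1 ≤ ∑ j, k' j :=
    le_trans hk (Finset.single_le_sum (fun j _ => Nat.zero_le _) (Finset.mem_univ i))
  refine MvPowerSeries.ext fun d => ?_
  rw [coeff_mul_one_sub, coeff_X_mul']
  by_cases h1 : Finsupp.single i 1 ≤ d
  · have hdi : 1 ≤ d i := Finsupp.single_le_iff.mp h1
    rw [if_pos h1, if_pos h1]
    set d' := d - Finsupp.single i 1 with hd'
    have hd'i : d' i = d i - 1 := by
      rw [hd', Finsupp.tsub_apply, Finsupp.single_eq_same]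
    have hd'j : ∀ j ≠ i, d' j = d j := fun j hj => by
      rw [hd', Finsupp.tsub_apply, Finsupp.single_eq_of_ne hj, Nat.sub_zero]
    have hsumd' : ∑ j, d' j = (∑ j, d j) - 1 := sum_sub_single d i h1
    rw [coeff_Fc, coeff_Fc, coeff_Fc]
    by_cases hcond : ∀ j, k' j ≤ d j
    · have hsums : ∑ j, k' j ≤ ∑ j, d j := Finset.sum_le_sum fun j _ => hcond j
      have hcond'' : ∀ j, k'' j ≤ d' j := by
        intro j
        by_cases hj : j = i
        · subst hj; rw [hk''i, hd'i]; have := hcond j; omega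
        · rw [hk''j j hj, hd'j j hj]; exact hcond j
      rw [if_pos hcond, if_pos hcond'']
      have hexp'' : (∑ j, d' j) - ∑ j, k'' j = (∑ j, d j) - ∑ j, k' j := by
        rw [hsumd', hsumk'']; omega
      have hApr : ∏ j, (d' j).choose (k'' j) =
          (d i - 1).choose (k' i - 1) * ∏ j ∈ Finset.univ.erase i, (d j).choose (k' j) := by
        rw [← Finset.mul_prod_erase Finset.univ _ (Finset.mem_univ i), hd'i, hk''i]
        congr 1
        exact Finset.prod_congr rfl fun j hj => by
          rw [hd'j j (Finset.ne_of_mem_erase hj), hk''j j (Finset.ne_of_mem_erase hj)]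
      have hBpr : ∏ j, (d j).choose (k' j) =
          (d i).choose (k' i) * ∏ j ∈ Finset.univ.erase i, (d j).choose (k' j) :=
        (Finset.mul_prod_erase Finset.univ _ (Finset.mem_univ i)).symm
      by_cases hlt : k' i < d i
      · have hcond' : ∀ j, k' j ≤ d' j := by
          intro j
          by_cases hj : j = i
          · subst hj; rw [hd'i]; omega
          · rw [hd'j j hj]; exact hcond j
        rw [if_pos hcond']
        have hCpr : ∏ j, (d' j).choose (k' j) =
            (d i - 1).choose (k' i) * ∏ j ∈ Finset.univ.erase i, (d j).choose (k' j) := by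
          rw [← Finset.mul_prod_erase Finset.univ _ (Finset.mem_univ i), hd'i]
          congr 1
          exact Finset.prod_congr rfl fun j hj => by rw [hd'j j (Finset.ne_of_mem_erase hj)]
        rw [hApr, hBpr, hCpr, hexp'', hsumd']
        have hsums1 : ∑ j, k' j < ∑ j, d j := by
          have : ∑ j ∈ Finset.univ.erase i, k' j ≤ ∑ j ∈ Finset.univ.erase i, d j :=
            Finset.sum_le_sum fun j _ => hcond j
          rw [← Finset.add_sum_erase _ k' (Finset.mem_univ i),
            ← Finset.add_sum_erase _ (fun j => d j) (Finset.mem_univ i)]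
          omega
        have hpexp : p * p ^ ((∑ j, d j) - 1 - ∑ j, k' j) = p ^ ((∑ j, d j) - ∑ j, k' j) := by
          rw [← pow_succ']
          congr 1
          omega
        have hpascal : (d i).choose (k' i) =
            (d i - 1).choose (k' i - 1) + (d i - 1).choose (k' i) := by
          obtain ⟨a, ha⟩ : ∃ a, d i = a + 1 := ⟨d i - 1, by omega⟩
          obtain ⟨b, hb⟩ : ∃ b, k' i = b + 1 := ⟨k' i - 1, by omega⟩
          rw [ha, hb]
          simp [Nat.choose_succ_succ, Nat.add_sub_cancel]
        rw [hpascal]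
        push_cast
        rw [← hpexp]
        ring
      · have heq : k' i = d i := by have := hcond i; omega
        have hcond' : ¬∀ j, k' j ≤ d' j := fun h => by
          have := h i; rw [hd'i] at this; omega
        rw [if_neg hcond', hApr, hBpr, hexp'', heq, Nat.choose_self]
        have : (d i - 1).choose (d i - 1) = 1 := Nat.choose_self _
        rw [heq] at *
        rw [this]
        ring
    · have hcond' : ¬∀ j, k' j ≤ d' j := fun h => hcond fun j => by
        by_cases hj : j = i
        · subst hj; have := h j; rw [hd'i] at this; omega
        · have := h j; rwa [hd'j j hj] at this
      have hcond'' : ¬∀ j, k'' j ≤ d' j := fun h => hcond fun j => by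
        by_cases hj : j = i
        · subst hj; have := h j; rw [hd'i, hk''i] at this; omega
        · have := h j; rwa [hd'j j hj, hk''j j hj] at this
      rw [if_neg hcond, if_neg hcond', if_neg hcond'']
      ring
  · rw [if_neg h1, if_neg h1, sub_zero, coeff_Fc, if_neg]
    intro h
    have := h i
    have hdi : d i = 0 := by
      have := Finsupp.single_le_iff.not.mp h1; omega
    omega

lemma key : ∀ (N : ℕ) (k' : Fin n → ℕ), (∑ j, k' j) = N →
    Fc p k' * ∏ j, (1 - MvPowerSeries.C (σ := Fin n) (R := ℤ) p * X j) ^ (k' j + 1) =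
      ∏ j, (X j : MvPowerSeries (Fin n) ℤ) ^ k' j := by
  intro N
  induction N with
  | zero =>
    intro k' hN
    have hk0 : ∀ j, k' j = 0 := by
      intro j
      have := Finset.sum_eq_zero_iff.mp hN j (Finset.mem_univ j)
      exact this
    have hFc : Fc p k' = Gs p Finset.univ := by
      refine MvPowerSeries.ext fun d => ?_
      rw [coeff_Fc, coeff_Gs, if_pos (fun j => hk0 j ▸ Nat.zero_le _),
        if_pos (fun j hj => absurd (Finset.mem_univ j) hj)]
      simp [hk0]
    simp only [hk0, zero_add, pow_one, pow_zero, Finset.prod_const_one]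
    rw [hFc]
    exact aux_base p (Finset.univ : Finset (Fin n))
  | succ N ih =>
    intro k' hN
    classical
    have hex : ∃ i, 1 ≤ k' i := by
      by_contra h
      push_neg at h
      have : ∑ j, k' j = 0 := Finset.sum_eq_zero fun j _ => by have := h j; omega
      omega
    obtain ⟨i, hi⟩ := hex
    set k'' := Function.update k' i (k' i - 1) with hk''
    have hk''i : k'' i = k' i - 1 := Function.update_self i _ k'
    have hk''j : ∀ j ≠ i, k'' j = k' j := fun j hj => Function.update_of_ne hj _ k'
    have hsum'' : ∑ j, k'' j = N := by
      rw [sum_update_sub k' i hi]; omega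
    have hsplit : ∏ j, (1 - MvPowerSeries.C (σ := Fin n) (R := ℤ) p * X j) ^ (k' j + 1) =
        (1 - MvPowerSeries.C (σ := Fin n) (R := ℤ) p * X i) *
          ∏ j, (1 - MvPowerSeries.C (σ := Fin n) (R := ℤ) p * X j) ^ (k'' j + 1) := by
      rw [← Finset.mul_prod_erase Finset.univ
          (fun j => (1 - MvPowerSeries.C (σ := Fin n) (R := ℤ) p * X j) ^ (k' j + 1)) (Finset.mem_univ i),
        ← Finset.mul_prod_erase Finset.univ
          (fun j => (1 - MvPowerSeries.C (σ := Fin n) (R := ℤ) p * X j) ^ (k'' j + 1)) (Finset.mem_univ i),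
        ← mul_assoc]
      congr 1
      · rw [hk''i, ← pow_succ']
        congr 1
        omega
      · exact Finset.prod_congr rfl fun j hj => by
          rw [hk''j j (Finset.ne_of_mem_erase hj)]
    have hsplitX : ∏ j, (X j : MvPowerSeries (Fin n) ℤ) ^ k' j =
        X i * ∏ j, (X j : MvPowerSeries (Fin n) ℤ) ^ k'' j := by
      rw [← Finset.mul_prod_erase Finset.univ
          (fun j => (X j : MvPowerSeries (Fin n) ℤ) ^ k' j) (Finset.mem_univ i),
        ← Finset.mul_prod_erase Finset.univ
          (fun j => (X j : MvPowerSeries (Fin n) ℤ) ^ k'' j) (Finset.mem_univ i),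
        ← mul_assoc]
      congr 1
      · rw [hk''i, ← pow_succ']
        congr 1
        omega
      · exact Finset.prod_congr rfl fun j hj => by
          rw [hk''j j (Finset.ne_of_mem_erase hj)]
    rw [hsplit, ← mul_assoc, step p k' i hi, mul_assoc, ih k'' hsum'', hsplitX]

end Stmt19Aux

/-- For `p ∈ ℤ` and `k' ∈ ℕ^n`, the generating function `F` of the `k'`-column of `L^p`
(coefficient `p^{|k|-|k'|} C(k,k')` at `x^k` for `k' ≤ k`, and `0` otherwise) satisfies
`F · ∏ j (1 - p x_j)^{k'_j+1} = x^{k'}`, i.e. `F = (1/∏(1-p x_j)) ∏ (x_j/(1-p x_j))^{k'_j}`,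
expressing `L^p` as a multivariate Riordan array. -/
theorem stmt19 (n : ℕ) (p : ℤ) (k' : Fin n → ℕ) (F : MvPowerSeries (Fin n) ℤ)
    (hF : ∀ d : Fin n →₀ ℕ, MvPowerSeries.coeff (R := ℤ) d F =
      if ∀ j, k' j ≤ d j then
        p ^ (∑ j, d j - ∑ j, k' j) * ((∏ j, (d j).choose (k' j) : ℕ) : ℤ)
      else 0) :
    F * ∏ j, (1 - MvPowerSeries.C (σ := Fin n) (R := ℤ) p * MvPowerSeries.X j) ^ (k' j + 1) =
      ∏ j, MvPowerSeries.X j ^ k' j := by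
  have hFeq : F = Stmt19Aux.Fc p k' := by
    refine MvPowerSeries.ext fun d => ?_
    rw [hF d, Stmt19Aux.coeff_Fc]
  rw [hFeq]
  exact Stmt19Aux.key p (∑ j, k' j) k' rfl
end
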